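/- Let θ ∈ (0,1) and 0 < s < t. Then for any ρ ∈ (−1/2, 1/2): ∫_0^s ((t−u)^{ρ} − (s−u)^{ρ})^2 du ≤ C (t−s)^{1+2ρ} for a constant C depending only on ρ. -/

import Mathlib

open MeasureTheory intervalIntegral

private lemma sq_rpow (a p : ℝ) (ha : 0 ≤ a) : (a ^ p) ^ 2 = a ^ (2 * p) := by
  rw [mul_comm, show (2:ℝ) = ((2:ℕ):ℝ) by norm_num, Real.rpow_mul_natCast ha p 2]

private lemma far_abs (ρ a h : ℝ) (hρl : -1 ≤ ρ) (hρr : ρ ≤ 1) (ha : 0 < a) (hh : 0 < h) :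
    |(a + h) ^ ρ - a ^ ρ| ≤ a ^ (ρ - 1) * h := by
  have hb : 0 < a + h := by linarith
  have hba : 1 ≤ (a + h) / a := (one_le_div ha).2 (by linarith)
  have key : (a + h) ^ ρ = a ^ ρ * ((a + h) / a) ^ ρ := by
    rw [← Real.mul_rpow ha.le (by positivity), mul_div_cancel₀ _ ha.ne']
  have haρ : 0 < a ^ ρ := Real.rpow_pos_of_pos ha ρ
  have hsplit : a ^ (ρ - 1) * a = a ^ ρ := by
    rw [← Real.rpow_add_one ha.ne' (ρ - 1)]; ring_nf
  rcases le_or_gt 0 ρ with hρ0 | hρ0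
  · have h1 : ((a + h) / a) ^ ρ ≤ ((a + h) / a) ^ (1 : ℝ) :=
      Real.rpow_le_rpow_of_exponent_le hba hρr
    rw [Real.rpow_one] at h1
    have h2 : (a + h) ^ ρ ≤ a ^ ρ * ((a + h) / a) := by
      rw [key]; exact mul_le_mul_of_nonneg_left h1 haρ.le
    have h3 : a ^ ρ * ((a + h) / a) = a ^ ρ + a ^ (ρ - 1) * h := by
      rw [mul_div_assoc'] at *
      field_simp
      nlinarith [hsplit]
    have h4 : a ^ ρ ≤ (a + h) ^ ρ := Real.rpow_le_rpow ha.le (by linarith) hρ0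
    rw [abs_of_nonneg (by linarith)]
    linarith
  · have h1 : ((a + h) / a) ^ (-1 : ℝ) ≤ ((a + h) / a) ^ ρ :=
      Real.rpow_le_rpow_of_exponent_le hba hρl
    have h1' : a / (a + h) ≤ ((a + h) / a) ^ ρ := by
      rwa [Real.rpow_neg_one, inv_div] at h1
    have h2 : a ^ ρ * (a / (a + h)) ≤ (a + h) ^ ρ := by
      rw [key]; exact mul_le_mul_of_nonneg_left h1' haρ.le
    have h4 : (a + h) ^ ρ ≤ a ^ ρ :=
      Real.rpow_le_rpow_of_nonpos ha (by linarith) hρ0.le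
    rw [abs_of_nonpos (by linarith)]
    have h5 : a ^ ρ - a ^ ρ * (a / (a + h)) = a ^ ρ * (h / (a + h)) := by
      field_simp; ring
    have h6 : a ^ ρ * (h / (a + h)) ≤ a ^ ρ * (h / a) := by
      apply mul_le_mul_of_nonneg_left _ haρ.le
      apply div_le_div_of_nonneg_left hh.le ha (by linarith)
    have h7 : a ^ ρ * (h / a) = a ^ (ρ - 1) * h := by
      rw [← hsplit]; field_simp
    linarith

private lemma far_sq (ρ a h : ℝ) (hρl : -1 ≤ ρ) (hρr : ρ ≤ 1) (ha : 0 < a) (hh : 0 < h) :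
    ((a + h) ^ ρ - a ^ ρ) ^ 2 ≤ h ^ 2 * a ^ (2 * ρ - 2) := by
  have h1 := far_abs ρ a h hρl hρr ha hh
  have h2 : ((a + h) ^ ρ - a ^ ρ) ^ 2 ≤ (a ^ (ρ - 1) * h) ^ 2 := by
    rw [← sq_abs]
    exact pow_le_pow_left₀ (abs_nonneg _) h1 2
  refine h2.trans_eq ?_
  rw [mul_pow, sq_rpow a (ρ - 1) ha.le]
  ring_nf

private lemma near_sq (ρ a h : ℝ) (hρl : -(1/2) < ρ) (hρr : ρ < 1/2) (ha : 0 ≤ a)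
    (hah : a ≤ h) (hh : 0 < h) :
    ((a + h) ^ ρ - a ^ ρ) ^ 2 ≤ 4 * h ^ (2 * ρ) + a ^ (2 * ρ) := by
  have h2ρ : 0 < h ^ (2 * ρ) := Real.rpow_pos_of_pos hh _
  rcases le_or_gt 0 ρ with hρ0 | hρ0
  · -- 0 ≤ diff ≤ (a+h)^ρ ≤ (2h)^ρ ≤ 2 h^ρ
    have hd0 : a ^ ρ ≤ (a + h) ^ ρ := Real.rpow_le_rpow ha (by linarith) hρ0
    have hb : (a + h) ^ ρ ≤ (2 * h) ^ ρ := Real.rpow_le_rpow (by linarith) (by linarith) hρ0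
    have hb2 : (2 * h) ^ ρ = 2 ^ ρ * h ^ ρ := Real.mul_rpow (by norm_num) hh.le
    have h2r : (2 : ℝ) ^ ρ ≤ 2 ^ (1 : ℝ) :=
      Real.rpow_le_rpow_of_exponent_le (by norm_num) (by linarith)
    rw [Real.rpow_one] at h2r
    have hhρ : 0 < h ^ ρ := Real.rpow_pos_of_pos hh ρ
    have haρ : 0 ≤ a ^ ρ := Real.rpow_nonneg ha ρ
    have hdle : (a + h) ^ ρ - a ^ ρ ≤ 2 * h ^ ρ := by
      have : (2:ℝ) ^ ρ * h ^ ρ ≤ 2 * h ^ ρ := mul_le_mul_of_nonneg_right h2r hhρ.le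
      nlinarith
    have hsq : ((a + h) ^ ρ - a ^ ρ) ^ 2 ≤ (2 * h ^ ρ) ^ 2 := by
      apply sq_le_sq' (by nlinarith) hdle
    have : (2 * h ^ ρ) ^ 2 = 4 * h ^ (2 * ρ) := by
      rw [mul_pow, sq_rpow h ρ hh.le]; norm_num
    have hanneg : 0 ≤ a ^ (2 * ρ) := Real.rpow_nonneg ha _
    nlinarith
  · -- ρ < 0
    rcases eq_or_lt_of_le ha with rfl | ha0
    · rw [Real.zero_rpow hρ0.ne, Real.zero_rpow (by linarith : 2 * ρ ≠ 0), zero_add]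
      rw [sub_zero, sq_rpow h ρ hh.le]
      nlinarith
    · have hd0 : (a + h) ^ ρ ≤ a ^ ρ :=
        Real.rpow_le_rpow_of_nonpos ha0 (by linarith) hρ0.le
      have hbpos : 0 < (a + h) ^ ρ := Real.rpow_pos_of_pos (by linarith) ρ
      have hsq : ((a + h) ^ ρ - a ^ ρ) ^ 2 ≤ (a ^ ρ) ^ 2 := by
        apply sq_le_sq' (by nlinarith) (by nlinarith [Real.rpow_pos_of_pos ha0 ρ])
      rw [sq_rpow a ρ ha0.le] at hsq
      nlinarith

private lemma II_sub (s q A B : ℝ) (hq : -1 < q) :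
    IntervalIntegrable (fun u => (s - u) ^ q) volume A B := by
  have := (intervalIntegral.intervalIntegrable_rpow' (a := s - A) (b := s - B) hq).comp_sub_left s
  simpa using this

private lemma II_far (s q A B : ℝ) (hA : 0 < s - A) (hB : 0 < s - B) :
    IntervalIntegrable (fun u => (s - u) ^ q) volume A B := by
  have h0 : (0:ℝ) ∉ Set.uIcc (s - A) (s - B) := by
    rw [Set.mem_uIcc]; push_neg
    constructor <;> intro h <;> [skip; linarith] <;> linarith
  have := (intervalIntegral.intervalIntegrable_rpow (r := q)
    (a := s - A) (b := s - B) (Or.inr h0)).comp_sub_left s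
  simpa using this

private lemma eval_sub (s q A B : ℝ) (h : -1 < q ∨ q ≠ -1 ∧ (0:ℝ) ∉ Set.uIcc (s - B) (s - A)) :
    (∫ u in A..B, (s - u) ^ q) = ((s - A) ^ (q + 1) - (s - B) ^ (q + 1)) / (q + 1) := by
  rw [intervalIntegral.integral_comp_sub_left (fun x => x ^ q) s, integral_rpow h]

theorem stmt_9 (θ : ℝ) (hθ : 0 < θ) (hθ1 : θ < 1)
    (ρ : ℝ) (hρ : -(1 / 2) < ρ) (hρ1 : ρ < 1 / 2) :
    ∃ C > (0 : ℝ), ∀ s t : ℝ, 0 < s → s < t →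
      (∫ u in (0 : ℝ)..s, ((t - u) ^ ρ - (s - u) ^ ρ) ^ 2) ≤ C * (t - s) ^ (1 + 2 * ρ) := by
  have hp1 : (0:ℝ) < 1 + 2 * ρ := by linarith
  have hm1 : (0:ℝ) < 1 - 2 * ρ := by linarith
  refine ⟨4 + 1 / (1 + 2 * ρ) + 1 / (1 - 2 * ρ), by positivity, ?_⟩
  intro s t hs hst
  set h : ℝ := t - s with hh_def
  have hh : 0 < h := by simp [hh_def]; linarith
  have hX : 0 < h ^ (1 + 2 * ρ) := Real.rpow_pos_of_pos hh _
  set f : ℝ → ℝ := fun u => ((t - u) ^ ρ - (s - u) ^ ρ) ^ 2 with hf_def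
  by_cases hint : IntervalIntegrable f volume 0 s
  swap
  · rw [intervalIntegral.integral_undef hint]
    positivity
  -- rewrite t - u = (s - u) + h
  have hfu : ∀ u : ℝ, f u = (((s - u) + h) ^ ρ - (s - u) ^ ρ) ^ 2 := by
    intro u; simp only [hf_def]; rw [hh_def]; ring_nf
  have hXmul : h * h ^ (2 * ρ) = h ^ (1 + 2 * ρ) := by
    rw [Real.rpow_add hh, Real.rpow_one]
  have hnear_int : ∀ A B : ℝ, IntervalIntegrable
      (fun u => 4 * h ^ (2 * ρ) + (s - u) ^ (2 * ρ)) volume A B := by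
    intro A B
    exact (_root_.intervalIntegrable_const).add (II_sub s (2 * ρ) A B (by linarith))
  -- near bound on an interval [A, s] with s - A ≤ h
  have hnear : ∀ A : ℝ, 0 ≤ A → A ≤ s → s - A ≤ h →
      IntervalIntegrable f volume A s →
      (∫ u in A..s, f u) ≤ 4 * ((s - A) * h ^ (2 * ρ)) + (s - A) ^ (2 * ρ + 1) / (2 * ρ + 1) := by
    intro A hA hAs hAh hfi
    have hmono : (∫ u in A..s, f u) ≤ ∫ u in A..s, (4 * h ^ (2 * ρ) + (s - u) ^ (2 * ρ)) := by
      apply intervalIntegral.integral_mono_on hAs hfi (hnear_int A s)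
      intro u hu
      rw [hfu u]
      exact near_sq ρ (s - u) h hρ hρ1 (by linarith [hu.2]) (by linarith [hu.1]) hh
    have heval : (∫ u in A..s, (4 * h ^ (2 * ρ) + (s - u) ^ (2 * ρ)))
        = 4 * ((s - A) * h ^ (2 * ρ)) + (s - A) ^ (2 * ρ + 1) / (2 * ρ + 1) := by
      rw [intervalIntegral.integral_add _root_.intervalIntegrable_const
        (II_sub s (2 * ρ) A s (by linarith)), intervalIntegral.integral_const,
        eval_sub s (2 * ρ) A s (Or.inl (by linarith)), sub_self,
        Real.zero_rpow (by linarith : 2 * ρ + 1 ≠ 0), smul_eq_mul]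
      ring
    linarith
  rcases le_or_gt s h with hsh | hsh
  · -- single near region
    have hb := hnear 0 le_rfl hs.le (by linarith) hint
    simp only [sub_zero] at hb
    have h1 : s ^ (2 * ρ + 1) ≤ h ^ (2 * ρ + 1) := Real.rpow_le_rpow hs.le hsh (by linarith)
    have h2 : h ^ (2 * ρ + 1) = h ^ (1 + 2 * ρ) := by ring_nf
    have h3 : s * h ^ (2 * ρ) ≤ h ^ (1 + 2 * ρ) := by
      rw [← hXmul]
      exact mul_le_mul_of_nonneg_right hsh (Real.rpow_pos_of_pos hh _).le
    rw [h2] at h1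
    have h4 : s ^ (2 * ρ + 1) / (2 * ρ + 1) ≤ h ^ (1 + 2 * ρ) / (2 * ρ + 1) := by
      apply div_le_div_of_nonneg_right h1 ?_ |>.trans_eq rfl
      linarith
    have h5 : 0 < 1 / (1 - 2 * ρ) * h ^ (1 + 2 * ρ) := by positivity
    calc (∫ u in (0:ℝ)..s, f u) ≤ 4 * (s * h ^ (2 * ρ)) + s ^ (2 * ρ + 1) / (2 * ρ + 1) := hb
      _ ≤ (4 + 1 / (1 + 2 * ρ) + 1 / (1 - 2 * ρ)) * h ^ (1 + 2 * ρ) := by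
          have e : h ^ (1 + 2 * ρ) / (2 * ρ + 1) = 1 / (1 + 2 * ρ) * h ^ (1 + 2 * ρ) := by
            rw [show 2 * ρ + 1 = 1 + 2 * ρ by ring]; ring
          nlinarith
  · -- split at s - h
    have hsub1 : Set.uIcc 0 (s - h) ⊆ Set.uIcc 0 s := by
      rw [Set.uIcc_of_le (by linarith : (0:ℝ) ≤ s - h), Set.uIcc_of_le hs.le]
      exact Set.Icc_subset_Icc le_rfl (by linarith)
    have hsub2 : Set.uIcc (s - h) s ⊆ Set.uIcc 0 s := by
      rw [Set.uIcc_of_le (by linarith : s - h ≤ s), Set.uIcc_of_le hs.le]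
      exact Set.Icc_subset_Icc (by linarith) le_rfl
    have hf1 : IntervalIntegrable f volume 0 (s - h) := hint.mono_set hsub1
    have hf2 : IntervalIntegrable f volume (s - h) s := hint.mono_set hsub2
    have hsplit : (∫ u in (0:ℝ)..(s-h), f u) + (∫ u in (s-h)..s, f u)
        = ∫ u in (0:ℝ)..s, f u :=
      intervalIntegral.integral_add_adjacent_intervals hf1 hf2
    -- far part
    have hgfar : IntervalIntegrable (fun u => h ^ 2 * (s - u) ^ (2 * ρ - 2)) volume 0 (s - h) :=
      (II_far s (2 * ρ - 2) 0 (s - h) (by linarith) (by linarith)).const_mul _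
    have hfarmono : (∫ u in (0:ℝ)..(s-h), f u)
        ≤ ∫ u in (0:ℝ)..(s-h), h ^ 2 * (s - u) ^ (2 * ρ - 2) := by
      apply intervalIntegral.integral_mono_on (by linarith) hf1 hgfar
      intro u hu
      rw [hfu u]
      exact far_sq ρ (s - u) h (by linarith) (by linarith) (by linarith [hu.2]) hh
    have hfareval : (∫ u in (0:ℝ)..(s-h), h ^ 2 * (s - u) ^ (2 * ρ - 2))
        = h ^ 2 * ((s ^ (2 * ρ - 1) - h ^ (2 * ρ - 1)) / (2 * ρ - 1)) := by
      rw [intervalIntegral.integral_const_mul, eval_sub s (2 * ρ - 2) 0 (s - h)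
        (Or.inr ⟨by intro hc; linarith [hc], by
          rw [Set.mem_uIcc]; push_neg
          constructor <;> intro hc <;> linarith⟩)]
      rw [sub_zero, sub_sub_cancel, show 2 * ρ - 2 + 1 = 2 * ρ - 1 by ring]
    have hXmul2 : h ^ 2 * h ^ (2 * ρ - 1) = h ^ (1 + 2 * ρ) := by
      rw [← Real.rpow_two, ← Real.rpow_add hh, show (2:ℝ) + (2 * ρ - 1) = 1 + 2 * ρ by ring]
    have hspos : 0 < s ^ (2 * ρ - 1) := Real.rpow_pos_of_pos hs _
    have hh2pos : 0 < h ^ 2 := by positivity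
    have hfarbound : h ^ 2 * ((s ^ (2 * ρ - 1) - h ^ (2 * ρ - 1)) / (2 * ρ - 1))
        ≤ 1 / (1 - 2 * ρ) * h ^ (1 + 2 * ρ) := by
      rw [← hXmul2]
      have e : (s ^ (2 * ρ - 1) - h ^ (2 * ρ - 1)) / (2 * ρ - 1)
          = (h ^ (2 * ρ - 1) - s ^ (2 * ρ - 1)) / (1 - 2 * ρ) := by
        rw [div_eq_div_iff (show 2 * ρ - 1 ≠ 0 by intro hc; linarith)
          (show 1 - 2 * ρ ≠ 0 by intro hc; linarith)]
        ring
      rw [e]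
      have : (h ^ (2 * ρ - 1) - s ^ (2 * ρ - 1)) / (1 - 2 * ρ)
          ≤ h ^ (2 * ρ - 1) / (1 - 2 * ρ) := by
        gcongr
        linarith
      calc h ^ 2 * ((h ^ (2 * ρ - 1) - s ^ (2 * ρ - 1)) / (1 - 2 * ρ))
          ≤ h ^ 2 * (h ^ (2 * ρ - 1) / (1 - 2 * ρ)) :=
            mul_le_mul_of_nonneg_left this hh2pos.le
        _ = 1 / (1 - 2 * ρ) * (h ^ 2 * h ^ (2 * ρ - 1)) := by ring
    -- near part
    have hb := hnear (s - h) (by linarith) (by linarith) (by linarith) hf2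
    rw [show s - (s - h) = h by ring] at hb
    have hnb : (∫ u in (s-h)..s, f u)
        ≤ 4 * h ^ (1 + 2 * ρ) + 1 / (1 + 2 * ρ) * h ^ (1 + 2 * ρ) := by
      have e1 : h * h ^ (2 * ρ) = h ^ (1 + 2 * ρ) := hXmul
      have e2 : h ^ (2 * ρ + 1) = h ^ (1 + 2 * ρ) := by ring_nf
      have e3 : h ^ (1 + 2 * ρ) / (2 * ρ + 1) = 1 / (1 + 2 * ρ) * h ^ (1 + 2 * ρ) := by
        rw [show 2 * ρ + 1 = 1 + 2 * ρ by ring]; ring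
      rw [e1, e2, e3] at hb
      linarith
    have hfb : (∫ u in (0:ℝ)..(s-h), f u) ≤ 1 / (1 - 2 * ρ) * h ^ (1 + 2 * ρ) :=
      hfarmono.trans (hfareval ▸ hfarbound)
    calc (∫ u in (0:ℝ)..s, f u)
        = (∫ u in (0:ℝ)..(s-h), f u) + (∫ u in (s-h)..s, f u) := hsplit.symm
      _ ≤ (4 + 1 / (1 + 2 * ρ) + 1 / (1 - 2 * ρ)) * h ^ (1 + 2 * ρ) := by linarith
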